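/- Fix an integer d ≥ 1, p ∈ (0,1), τ > 0, a frequency vector α = (α_1,…,α_d) ∈ ℝ^d, and a bounded family (f̃_j)_{j∈ℤ^d} of complex numbers satisfying conj(f̃_j) = f̃_{−j} for all j; set f(x) = Σ_{j∈ℤ^d} f̃_j ψ_j(x) and ω_j = j_1 α_1 + … + j_d α_d. Then for every x ∈ ℝ^d and every t ∈ ℝ, the evolved observable under the torus rotation flow Φ^t(x) = x + tα satisfies f(Φ^t(x)) = (1/(2κ̃)) Σ_{(i,j)∈ℤ^d×ℤ^d} e^{i(ω_j − ω_i)t} ψ_i^*(x) ψ_j(x) (c_{i,j−i} + c_{j,i−j}) f̃_{j−i}, the double sum converging absolutely. -/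

import Mathlib

/-! Statement 12: Koopman evolution of a real-valued observable under the torus rotation, in matrix elements. -/

noncomputable section

namespace QECD

/-- `|j|_p = |j_1|^p + … + |j_d|^p` for a multi-index `j ∈ ℤ^d`. -/
def normP (d : ℕ) (p : ℝ) (j : Fin d → ℤ) : ℝ := ∑ i, |((j i : ℝ))| ^ p

/-- `ψ_j(x) = e^{−τ|j|_p/2} e^{i j·x}` on the `d`-torus. -/
def psiD (d : ℕ) (p τ : ℝ) (j : Fin d → ℤ) (x : Fin d → ℝ) : ℂ :=
  (Real.exp (-(τ * normP d p j) / 2) : ℂ) *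
    Complex.exp (Complex.I * ((∑ i, (j i : ℝ) * x i : ℝ) : ℂ))

/-- Structure constants `c_{jl} = e^{−τ(|j|_p + |l|_p − |j+l|_p)/2}`. -/
def cstD (d : ℕ) (p τ : ℝ) (j l : Fin d → ℤ) : ℝ :=
  Real.exp (-(τ * (normP d p j + normP d p l - normP d p (j + l))) / 2)

/-- `κ̃ = Σ_{j∈ℤ^d} e^{−τ|j|_p}`. -/
def kapTilde (d : ℕ) (p τ : ℝ) : ℝ := ∑' j : Fin d → ℤ, Real.exp (-(τ * normP d p j))

/-- Koopman eigenfrequency `ω_j = j·α`. -/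
def omega (d : ℕ) (α : Fin d → ℝ) (j : Fin d → ℤ) : ℝ := ∑ i, (j i : ℝ) * α i

open Filter Asymptotics in
lemma summable_nat_exp (c p : ℝ) (hc : 0 < c) (hp : 0 < p) :
    Summable fun n : ℕ => Real.exp (-(c * (n : ℝ) ^ p)) := by
  have h1 : (fun x : ℝ => Real.exp (-c * x)) =o[atTop] fun x => x ^ (-2 / p) :=
    isLittleO_exp_neg_mul_rpow_atTop hc _
  have h2 := h1.comp_tendsto (tendsto_rpow_atTop hp)
  have h3 : (fun x : ℝ => Real.exp (-(c * x ^ p))) =o[atTop] fun x : ℝ => x ^ (-2 : ℝ) := by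
    refine h2.congr' ?_ ?_
    · filter_upwards with y
      simp [Function.comp, neg_mul]
    · filter_upwards [eventually_gt_atTop (0:ℝ)] with y hy
      simp only [Function.comp]
      rw [← Real.rpow_mul hy.le]
      congr 1
      field_simp
  have h4 := h3.isBigO.comp_tendsto (tendsto_natCast_atTop_atTop (R := ℝ))
  exact summable_of_isBigO_nat (Real.summable_nat_rpow.mpr (by norm_num)) h4

lemma summable_int_exp (c p : ℝ) (hc : 0 < c) (hp : 0 < p) :
    Summable fun n : ℤ => Real.exp (-(c * |(n : ℝ)| ^ p)) := by
  apply Summable.of_nat_of_neg <;>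
  · apply (summable_nat_exp c p hc hp).congr
    intro n
    norm_num

lemma summable_pi_exp (d : ℕ) (c p : ℝ) (hc : 0 < c) (hp : 0 < p) :
    Summable fun j : Fin d → ℤ => Real.exp (-(c * normP d p j)) := by
  induction d with
  | zero => exact .of_finite
  | succ n ih =>
    have key : Summable fun q : ℤ × (Fin n → ℤ) =>
        Real.exp (-(c * |(q.1 : ℝ)| ^ p)) * Real.exp (-(c * normP n p q.2)) :=
      (summable_int_exp c p hc hp).mul_of_nonneg ih
        (fun _ => (Real.exp_pos _).le) (fun _ => (Real.exp_pos _).le)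
    have := ((Fin.consEquiv (fun _ : Fin (n + 1) => ℤ)).symm.summable_iff
      (f := fun q : ℤ × (Fin n → ℤ) =>
        Real.exp (-(c * |(q.1 : ℝ)| ^ p)) * Real.exp (-(c * normP n p q.2)))).2 key
    apply this.congr
    intro j
    simp only [Function.comp, Fin.consEquiv, Equiv.coe_fn_symm_mk, Fin.tail]
    rw [← Real.exp_add, Real.exp_eq_exp]
    have : normP (n + 1) p j = |(j 0 : ℝ)| ^ p + normP n p fun i => j i.succ := by
      rw [normP, Fin.sum_univ_succ]; rfl
    rw [this]
    ring_nf
    rfl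

lemma normP_neg (d : ℕ) (p : ℝ) (j : Fin d → ℤ) : normP d p (-j) = normP d p j := by
  unfold normP
  refine Finset.sum_congr rfl fun m _ => ?_
  simp

lemma abs_psiD (d : ℕ) (p τ : ℝ) (j : Fin d → ℤ) (y : Fin d → ℝ) :
    ‖psiD d p τ j y‖ = Real.exp (-(τ * normP d p j) / 2) := by
  rw [psiD, norm_mul, Complex.norm_real, Real.norm_eq_abs, abs_of_nonneg (Real.exp_pos _).le]
  rw [Complex.norm_exp]
  simp

lemma mul_helper (a b c1 c2 e1 e2 rk P1 P2 P3 P4 f : ℂ)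
    (hs : a * b * (c1 + c2) = (e1 + e2) * rk)
    (hp : P1 * P2 * P3 = P4) :
    P1 * (a * P2) * (b * P3) * (c1 + c2) * f = (e1 + e2) * (f * (rk * P4)) := by
  linear_combination ((c1 + c2) * a * b * f) * hp + (f * P4) * hs

lemma key_term (d : ℕ) (p τ : ℝ) (α : Fin d → ℝ) (ft : (Fin d → ℤ) → ℂ)
    (x : Fin d → ℝ) (t : ℝ) (i j : Fin d → ℤ) :
    Complex.exp (Complex.I * (((omega d α j - omega d α i) * t : ℝ) : ℂ)) *
      (starRingEnd ℂ) (psiD d p τ i x) * psiD d p τ j x *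
      ((cstD d p τ i (j - i) + cstD d p τ j (i - j) : ℝ) : ℂ) * ft (j - i)
    = ((Real.exp (-(τ * normP d p i)) + Real.exp (-(τ * normP d p j)) : ℝ) : ℂ) *
      (ft (j - i) * psiD d p τ (j - i) (fun m => x m + t * α m)) := by
  have hij : i + (j - i) = j := by abel
  have hji : j + (i - j) = i := by abel
  have hnm : normP d p (i - j) = normP d p (j - i) := by
    rw [show i - j = -(j - i) by abel, normP_neg]
  have hscal : Real.exp (-(τ * normP d p i) / 2) * Real.exp (-(τ * normP d p j) / 2) *
      (cstD d p τ i (j - i) + cstD d p τ j (i - j))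
      = (Real.exp (-(τ * normP d p i)) + Real.exp (-(τ * normP d p j))) *
        Real.exp (-(τ * normP d p (j - i)) / 2) := by
    rw [cstD, cstD, hij, hji, hnm, mul_add, add_mul]
    congr 1 <;> simp only [← Real.exp_add] <;> rw [Real.exp_eq_exp] <;> ring
  have hphase : (omega d α j - omega d α i) * t +
      ((∑ m, (j m : ℝ) * x m) - ∑ m, (i m : ℝ) * x m)
      = ∑ m, ((j - i) m : ℝ) * (x m + t * α m) := by
    rw [omega, omega, ← Finset.sum_sub_distrib, ← Finset.sum_sub_distrib,
      Finset.sum_mul, ← Finset.sum_add_distrib]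
    refine Finset.sum_congr rfl fun m _ => ?_
    simp only [Pi.sub_apply, Int.cast_sub]
    ring
  have hph : Complex.exp (Complex.I * (((omega d α j - omega d α i) * t : ℝ) : ℂ)) *
      Complex.exp (-(Complex.I * ((∑ m, (i m : ℝ) * x m : ℝ) : ℂ))) *
      Complex.exp (Complex.I * ((∑ m, (j m : ℝ) * x m : ℝ) : ℂ))
      = Complex.exp (Complex.I * ((∑ m, ((j - i) m : ℝ) * (x m + t * α m) : ℝ) : ℂ)) := by
    rw [← Complex.exp_add, ← Complex.exp_add, ← hphase]
    congr 1
    push_cast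
    ring
  have hconj : (starRingEnd ℂ) (psiD d p τ i x)
      = ((Real.exp (-(τ * normP d p i) / 2) : ℝ) : ℂ) *
        Complex.exp (-(Complex.I * ((∑ m, (i m : ℝ) * x m : ℝ) : ℂ))) := by
    rw [psiD, map_mul, Complex.conj_ofReal, ← Complex.exp_conj, map_mul, Complex.conj_I,
      Complex.conj_ofReal, neg_mul]
  have hscalC := congrArg (fun r : ℝ => (r : ℂ)) hscal
  push_cast at hscalC
  rw [hconj, psiD, psiD]
  push_cast at hph ⊢
  exact mul_helper _ _ _ _ _ _ _ _ _ _ _ _ hscalC hph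

set_option maxHeartbeats 2000000 in
/-- For bounded coefficients `(f̃_j)` with `conj f̃_j = f̃_{−j}`, and
`f = Σ_j f̃_j ψ_j`, the evolved observable under the rotation flow `Φ^t(x) = x + tα` satisfies
`f(Φ^t(x)) = (1/(2κ̃)) Σ_{(i,j)} e^{i(ω_j−ω_i)t} ψ_i^*(x) ψ_j(x)(c_{i,j−i}+c_{j,i−j}) f̃_{j−i}`,
the double sum converging absolutely. -/
theorem koopman_evolution_expectation (d : ℕ) (hd : 1 ≤ d) (p τ : ℝ)
    (hp : p ∈ Set.Ioo (0 : ℝ) 1) (hτ : 0 < τ) (α : Fin d → ℝ)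
    (ft : (Fin d → ℤ) → ℂ) (B : ℝ) (hB : ∀ j, ‖ft j‖ ≤ B)
    (hconj : ∀ j, (starRingEnd ℂ) (ft j) = ft (-j)) (x : Fin d → ℝ) (t : ℝ) :
    Summable (fun ij : (Fin d → ℤ) × (Fin d → ℤ) =>
      ‖Complex.exp (Complex.I *
          (((omega d α ij.2 - omega d α ij.1) * t : ℝ) : ℂ)) *
        (starRingEnd ℂ) (psiD d p τ ij.1 x) * psiD d p τ ij.2 x *
        ((cstD d p τ ij.1 (ij.2 - ij.1) + cstD d p τ ij.2 (ij.1 - ij.2) : ℝ) : ℂ) *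
        ft (ij.2 - ij.1)‖) ∧
    (∑' j : Fin d → ℤ, ft j * psiD d p τ j (fun i => x i + t * α i))
      = (1 / (2 * (kapTilde d p τ : ℂ))) *
          ∑' ij : (Fin d → ℤ) × (Fin d → ℤ),
            Complex.exp (Complex.I * (((omega d α ij.2 - omega d α ij.1) * t : ℝ) : ℂ)) *
              (starRingEnd ℂ) (psiD d p τ ij.1 x) * psiD d p τ ij.2 x *
              ((cstD d p τ ij.1 (ij.2 - ij.1) + cstD d p τ ij.2 (ij.1 - ij.2) : ℝ) : ℂ) *
              ft (ij.2 - ij.1) := by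
  obtain ⟨hp0, hp1⟩ := hp
  set E : (Fin d → ℤ) → ℝ := fun i => Real.exp (-(τ * normP d p i)) with hE
  set G : (Fin d → ℤ) → ℂ := fun k => ft k * psiD d p τ k (fun m => x m + t * α m) with hG
  have hEsum : Summable E := summable_pi_exp d τ p hτ hp0
  have hE2sum : Summable fun k : Fin d → ℤ => Real.exp (-(τ / 2 * normP d p k)) :=
    summable_pi_exp d (τ / 2) p (by positivity) hp0
  have habsG : ∀ k, ‖G k‖ ≤ B * Real.exp (-(τ / 2 * normP d p k)) := by
    intro k
    rw [hG]
    simp only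
    rw [norm_mul, abs_psiD, show -(τ * normP d p k) / 2 = -(τ / 2 * normP d p k) by ring]
    exact mul_le_mul_of_nonneg_right (hB k) (Real.exp_pos _).le
  have hGabs : Summable fun k => ‖G k‖ :=
    Summable.of_nonneg_of_le (fun _ => norm_nonneg _) habsG (hE2sum.mul_left B)
  have hGsum : Summable G :=
    hGabs.of_norm
  let e1 : ((Fin d → ℤ) × (Fin d → ℤ)) ≃ ((Fin d → ℤ) × (Fin d → ℤ)) :=
    ⟨fun q => (q.1, q.2 - q.1), fun q => (q.1, q.2 + q.1),
      fun q => by simp, fun q => by simp⟩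
  let e2 : ((Fin d → ℤ) × (Fin d → ℤ)) ≃ ((Fin d → ℤ) × (Fin d → ℤ)) :=
    ⟨fun q => (q.2, q.2 - q.1), fun q => (q.1 - q.2, q.1),
      fun q => by simp, fun q => by simp⟩
  have hprod1 : Summable fun q : (Fin d → ℤ) × (Fin d → ℤ) => E q.1 * ‖G q.2‖ :=
    hEsum.mul_of_nonneg hGabs (fun _ => (Real.exp_pos _).le) (fun _ => norm_nonneg _)
  have hs1 : Summable fun q : (Fin d → ℤ) × (Fin d → ℤ) =>
      E q.1 * ‖G (q.2 - q.1)‖ :=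
    (e1.summable_iff (f := fun q : (Fin d → ℤ) × (Fin d → ℤ) =>
      E q.1 * ‖G q.2‖)).2 hprod1
  have hs2 : Summable fun q : (Fin d → ℤ) × (Fin d → ℤ) =>
      E q.2 * ‖G (q.2 - q.1)‖ :=
    (e2.summable_iff (f := fun q : (Fin d → ℤ) × (Fin d → ℤ) =>
      E q.1 * ‖G q.2‖)).2 hprod1
  have habsT : ∀ q : (Fin d → ℤ) × (Fin d → ℤ),
      E q.1 * ‖G (q.2 - q.1)‖ + E q.2 * ‖G (q.2 - q.1)‖
      = ‖Complex.exp (Complex.I *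
          (((omega d α q.2 - omega d α q.1) * t : ℝ) : ℂ)) *
        (starRingEnd ℂ) (psiD d p τ q.1 x) * psiD d p τ q.2 x *
        ((cstD d p τ q.1 (q.2 - q.1) + cstD d p τ q.2 (q.1 - q.2) : ℝ) : ℂ) *
        ft (q.2 - q.1)‖ := by
    intro q
    rw [key_term d p τ α ft x t q.1 q.2]
    simp only [hE, norm_mul, Complex.norm_real, Real.norm_eq_abs]
    rw [abs_of_nonneg (by positivity : (0:ℝ) ≤ Real.exp (-(τ * normP d p q.1)) +
      Real.exp (-(τ * normP d p q.2)))]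
    simp only [hG, norm_mul]
    ring
  have hTabs : Summable (fun q : (Fin d → ℤ) × (Fin d → ℤ) =>
      ‖Complex.exp (Complex.I *
          (((omega d α q.2 - omega d α q.1) * t : ℝ) : ℂ)) *
        (starRingEnd ℂ) (psiD d p τ q.1 x) * psiD d p τ q.2 x *
        ((cstD d p τ q.1 (q.2 - q.1) + cstD d p τ q.2 (q.1 - q.2) : ℝ) : ℂ) *
        ft (q.2 - q.1)‖) := (hs1.add hs2).congr habsT
  refine ⟨hTabs, ?_⟩
  -- complex summand summability
  have hC1 : Summable fun q : (Fin d → ℤ) × (Fin d → ℤ) =>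
      ((E q.1 : ℝ) : ℂ) * G (q.2 - q.1) := by
    apply Summable.of_norm
    apply hs1.congr
    intro q
    rw [norm_mul ((E q.1 : ℝ) : ℂ), Complex.norm_real, Real.norm_eq_abs, abs_of_nonneg (Real.exp_pos _).le]
  have hC2 : Summable fun q : (Fin d → ℤ) × (Fin d → ℤ) =>
      ((E q.2 : ℝ) : ℂ) * G (q.2 - q.1) := by
    apply Summable.of_norm
    apply hs2.congr
    intro q
    rw [norm_mul ((E q.2 : ℝ) : ℂ), Complex.norm_real, Real.norm_eq_abs, abs_of_nonneg (Real.exp_pos _).le]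
  have hEnorm : Summable fun i : Fin d → ℤ => ‖((E i : ℝ) : ℂ)‖ := by
    apply hEsum.congr
    intro i
    rw [Complex.norm_real, Real.norm_eq_abs, abs_of_nonneg (Real.exp_pos _).le]
  have hGnorm : Summable fun k : Fin d → ℤ => ‖G k‖ :=
    hGabs
  have hmul : ((∑' i : Fin d → ℤ, ((E i : ℝ) : ℂ)) * ∑' k, G k)
      = ∑' q : (Fin d → ℤ) × (Fin d → ℤ), ((E q.1 : ℝ) : ℂ) * G q.2 :=
    tsum_mul_tsum_of_summable_norm hEnorm hGnorm
  have hEc : (∑' i : Fin d → ℤ, ((E i : ℝ) : ℂ)) = ((kapTilde d p τ : ℝ) : ℂ) := by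
    rw [kapTilde, Complex.ofReal_tsum]
  have h1 : (∑' q : (Fin d → ℤ) × (Fin d → ℤ), ((E q.1 : ℝ) : ℂ) * G (q.2 - q.1))
      = ((kapTilde d p τ : ℝ) : ℂ) * ∑' k, G k := by
    rw [← hEc, hmul]
    exact e1.tsum_eq (f := fun q : (Fin d → ℤ) × (Fin d → ℤ) => ((E q.1 : ℝ) : ℂ) * G q.2)
  have h2 : (∑' q : (Fin d → ℤ) × (Fin d → ℤ), ((E q.2 : ℝ) : ℂ) * G (q.2 - q.1))
      = ((kapTilde d p τ : ℝ) : ℂ) * ∑' k, G k := by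
    rw [← hEc, hmul]
    exact e2.tsum_eq (f := fun q : (Fin d → ℤ) × (Fin d → ℤ) => ((E q.1 : ℝ) : ℂ) * G q.2)
  have hκpos : 0 < kapTilde d p τ := by
    refine Summable.tsum_pos hEsum (fun j => (Real.exp_pos _).le) 0 (Real.exp_pos _)
  have hκ : ((kapTilde d p τ : ℝ) : ℂ) ≠ 0 := by
    exact_mod_cast hκpos.ne'
  calc (∑' j : Fin d → ℤ, ft j * psiD d p τ j (fun i => x i + t * α i))
      = ∑' k, G k := by rw [hG]
    _ = (1 / (2 * (kapTilde d p τ : ℂ))) *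
          ∑' ij : (Fin d → ℤ) × (Fin d → ℤ),
            Complex.exp (Complex.I * (((omega d α ij.2 - omega d α ij.1) * t : ℝ) : ℂ)) *
              (starRingEnd ℂ) (psiD d p τ ij.1 x) * psiD d p τ ij.2 x *
              ((cstD d p τ ij.1 (ij.2 - ij.1) + cstD d p τ ij.2 (ij.1 - ij.2) : ℝ) : ℂ) *
              ft (ij.2 - ij.1) := by
        have hsplit : (∑' ij : (Fin d → ℤ) × (Fin d → ℤ),
            Complex.exp (Complex.I * (((omega d α ij.2 - omega d α ij.1) * t : ℝ) : ℂ)) *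
              (starRingEnd ℂ) (psiD d p τ ij.1 x) * psiD d p τ ij.2 x *
              ((cstD d p τ ij.1 (ij.2 - ij.1) + cstD d p τ ij.2 (ij.1 - ij.2) : ℝ) : ℂ) *
              ft (ij.2 - ij.1))
            = (∑' q : (Fin d → ℤ) × (Fin d → ℤ), ((E q.1 : ℝ) : ℂ) * G (q.2 - q.1))
              + ∑' q : (Fin d → ℤ) × (Fin d → ℤ), ((E q.2 : ℝ) : ℂ) * G (q.2 - q.1) := by
          rw [← Summable.tsum_add hC1 hC2]
          apply tsum_congr
          intro q
          rw [key_term d p τ α ft x t q.1 q.2]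
          simp only [hE]
          push_cast
          ring
        rw [hsplit, h1, h2]
        field_simp
        ring
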